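/- Let x, y ∈ ℝⁿ with x ≠ y, let J = {i ∈ [n] : x_i = y_i}, and let x_{[J]} = Σ_{j∈J} x_j e_j (the vector agreeing with x on J and zero elsewhere). Then both half-lines x_{[J]} + { t·(y ⊟ x) : t ∈ [1,∞) } and x_{[J]} + { t·(x ⊟ y) : t ∈ [1,∞) } are contained in D^∞(x,y); in particular when J = ∅ the half-lines { t·(y ⊟ x) : t ≥ 1 } and { t·(x ⊟ y) : t ≥ 1 } are contained in D^∞(x,y). -/

import Mathlib

open Filter Finset

/-- The binary idempotent operation `⊞`. -/
noncomputable def bop (a b : ℝ) : ℝ :=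
  if |b| < |a| then a else if |a| < |b| then b else (a + b) / 2

/-- The unique real `(2p+1)`-th root of `t`. -/
noncomputable def oddRoot (p : ℕ) (t : ℝ) : ℝ :=
  Real.sign t * |t| ^ ((1 : ℝ) / (2 * (p : ℝ) + 1))

/-- `ξ_I[u](α) = Card{i ∈ I : u i = α} − Card{i ∈ I : u i = −α}`. -/
noncomputable def xiMap {ι : Type*} (I : Finset ι) (u : ι → ℝ) (α : ℝ) : ℤ :=
  ((I.filter fun i => u i = α).card : ℤ) - ((I.filter fun i => u i = -α).card : ℤ)

/-- The residual index set `J_I(u)`. -/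
noncomputable def resid {ι : Type*} (I : Finset ι) (u : ι → ℝ) : Finset ι :=
  I.filter fun i => xiMap I u (u i) ≠ 0

/-- The `n`-ary extension `⊞_{i ∈ I} u i` of the binary operation `⊞`. -/
noncomputable def Fop {ι : Type*} (I : Finset ι) (u : ι → ℝ) : ℝ :=
  if h : (resid I u).Nonempty then
    if 0 < xiMap I u ((resid I u).sup' h fun i => |u i|) then (resid I u).sup' h u
    else if xiMap I u ((resid I u).sup' h fun i => |u i|) < 0 then (resid I u).inf' h u
    else 0
  else 0

/-- The Chebyshev norm `max_{i ∈ [n]} |x i|`. -/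
noncomputable def chebNorm {n : ℕ} (x : Fin n → ℝ) : ℝ := ⨆ i, |x i|

/-- The ultrametric distance `d_⊞(x,y) = max_i |x_i ⊟ y_i|`. -/
noncomputable def dB {n : ℕ} (x y : Fin n → ℝ) : ℝ := ⨆ i, |bop (x i) (-(y i))|

/-- The F-line `D^∞(x,y)`. -/
noncomputable def fLine {n : ℕ} (x y : Fin n → ℝ) : Set (Fin n → ℝ) :=
  { z | ∃ t r s w : ℝ, Fop (Finset.univ : Finset (Fin 4)) ![t, r, s, w] = 1 ∧
      z = fun i => Fop (Finset.univ : Finset (Fin 4)) ![t * x i, r * x i, s * y i, w * y i] }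

/-! ### Auxiliary lemmas -/

lemma xiMap_neg' {ι : Type*} (I : Finset ι) (u : ι → ℝ) (α : ℝ) :
    xiMap I u (-α) = - xiMap I u α := by
  simp only [xiMap, neg_neg]; ring

lemma xi4 (a b c d α : ℝ) :
    xiMap Finset.univ ![a,b,c,d] α =
      (((if a = α then 1 else 0) + (if b = α then 1 else 0)
        + (if c = α then 1 else 0) + (if d = α then 1 else 0) : ℤ)
       - ((if a = -α then 1 else 0) + (if b = -α then 1 else 0)
        + (if c = -α then 1 else 0) + (if d = -α then 1 else 0) : ℤ)) := by
  simp only [xiMap, Finset.card_filter, Fin.sum_univ_four]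
  push_cast
  grind

lemma xiMap_pos' {ι : Type*} (I : Finset ι) (u : ι → ℝ) (α : ℝ) (i₀ : ι)
    (hi : i₀ ∈ I) (h : u i₀ = α) (hall : ∀ i ∈ I, u i ≠ -α) :
    0 < xiMap I u α := by
  have h1 : (I.filter fun i => u i = -α) = ∅ :=
    Finset.filter_eq_empty_iff.mpr hall
  have h2 : 0 < (I.filter fun i => u i = α).card :=
    Finset.card_pos.mpr ⟨i₀, Finset.mem_filter.mpr ⟨hi, h⟩⟩
  unfold xiMap
  rw [h1]
  simpa using h2

lemma Fop_of_eq_zero {ι : Type*} (I : Finset ι) (u : ι → ℝ) (h : ∀ i ∈ I, u i = 0) :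
    Fop I u = 0 := by
  have hres : resid I u = ∅ := by
    refine Finset.filter_eq_empty_iff.mpr ?_
    intro i hi
    rw [h i hi]
    simp [xiMap, neg_zero]
  rw [Fop, dif_neg (by rw [hres]; exact Finset.not_nonempty_empty)]

lemma main2 (u : Fin 4 → ℝ) (m : ℝ) (hm : m ≠ 0)
    (h2 : 0 < xiMap Finset.univ u m)
    (h1 : ∀ i, u i = m ∨ u i = -m ∨ |u i| < |m| ∨ xiMap Finset.univ u (u i) = 0) :
    Fop Finset.univ u = m := by
  have hA : 0 < ((Finset.univ.filter fun i => u i = m).card : ℤ) := by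
    have hB : (0:ℤ) ≤ ((Finset.univ.filter fun i => u i = -m).card : ℤ) := by positivity
    unfold xiMap at h2; omega
  obtain ⟨i₀, hi₀⟩ := Finset.card_pos.mp (by exact_mod_cast hA)
  have hu₀ : u i₀ = m := (Finset.mem_filter.mp hi₀).2
  have hi₀r : i₀ ∈ resid Finset.univ u := by
    refine Finset.mem_filter.mpr ⟨Finset.mem_univ _, ?_⟩
    rw [hu₀]; exact h2.ne'
  have hne : (resid Finset.univ u).Nonempty := ⟨i₀, hi₀r⟩
  have habs : ∀ i ∈ resid Finset.univ u, |u i| ≤ |m| := by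
    intro i hi
    rcases h1 i with h | h | h | h
    · rw [h]
    · rw [h, abs_neg]
    · exact h.le
    · exact absurd h (Finset.mem_filter.mp hi).2
  have hsup : ((resid Finset.univ u).sup' hne fun i => |u i|) = |m| := by
    refine le_antisymm (Finset.sup'_le _ _ habs) ?_
    have := Finset.le_sup' (fun i => |u i|) hi₀r
    rwa [hu₀] at this
  rw [Fop, dif_pos hne, hsup]
  rcases hm.lt_or_gt with hneg | hpos
  · rw [abs_of_neg hneg, xiMap_neg']
    rw [if_neg (by omega), if_pos (by omega)]
    refine le_antisymm ?_ (Finset.le_inf' _ _ ?_)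
    · have := Finset.inf'_le u hi₀r
      rwa [hu₀] at this
    · intro i hi
      rcases h1 i with h | h | h | h
      · rw [h]
      · rw [h]; linarith
      · have h' : -|m| ≤ u i := by
          have := neg_abs_le (u i); linarith
        rwa [abs_of_neg hneg, neg_neg] at h'
      · exact absurd h (Finset.mem_filter.mp hi).2
  · rw [abs_of_pos hpos, if_pos h2]
    refine le_antisymm (Finset.sup'_le _ _ ?_) ?_
    · intro i hi
      rcases h1 i with h | h | h | h
      · rw [h]
      · rw [h]; linarith
      · have h' : u i ≤ |m| := (le_abs_self _).trans h.le
        rwa [abs_of_pos hpos] at h'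
      · exact absurd h (Finset.mem_filter.mp hi).2
    · have := Finset.le_sup' u hi₀r
      rwa [hu₀] at this

lemma xiMap_comp {ι : Type*} [Fintype ι] [DecidableEq ι] (u : ι → ℝ) (e : ι ≃ ι) (α : ℝ) :
    xiMap Finset.univ (u ∘ e) α = xiMap Finset.univ u α := by
  unfold xiMap
  congr 1 <;> rw [Finset.card_filter, Finset.card_filter] <;>
  · simp only [Function.comp_apply]
    congr 1
    exact Equiv.sum_comp e (fun j => if u j = _ then (1:ℕ) else 0)

lemma Fop_comp {ι : Type*} [Fintype ι] [DecidableEq ι] (u : ι → ℝ) (e : ι ≃ ι) :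
    Fop Finset.univ (u ∘ e) = Fop Finset.univ u := by
  have hxi : ∀ α, xiMap Finset.univ (u ∘ e) α = xiMap Finset.univ u α := xiMap_comp u e
  have hmem : ∀ i, i ∈ resid Finset.univ (u ∘ e) ↔ e i ∈ resid Finset.univ u := by
    intro i
    simp only [resid, Finset.mem_filter, Finset.mem_univ, true_and, Function.comp_apply, hxi]
  by_cases h : (resid Finset.univ u).Nonempty
  · have h' : (resid Finset.univ (u ∘ e)).Nonempty := by
      obtain ⟨j, hj⟩ := h
      exact ⟨e.symm j, (hmem _).2 (by simpa using hj)⟩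
    have key : ∀ f : ι → ℝ, ((resid Finset.univ (u ∘ e)).sup' h' fun i => f (e i))
        = (resid Finset.univ u).sup' h f := by
      intro f
      apply le_antisymm
      · exact Finset.sup'_le _ _ fun i hi => Finset.le_sup' f ((hmem i).1 hi)
      · refine Finset.sup'_le _ _ fun j hj => ?_
        have hmem' : e.symm j ∈ resid Finset.univ (u ∘ e) := (hmem _).2 (by simpa using hj)
        have := Finset.le_sup' (fun i => f (e i)) hmem'
        simpa only [Equiv.apply_symm_apply] using this
    have keyinf : ((resid Finset.univ (u ∘ e)).inf' h' fun i => u (e i))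
        = (resid Finset.univ u).inf' h u := by
      apply le_antisymm
      · refine Finset.le_inf' _ _ fun j hj => ?_
        have hmem' : e.symm j ∈ resid Finset.univ (u ∘ e) := (hmem _).2 (by simpa using hj)
        have := Finset.inf'_le (fun i => u (e i)) hmem'
        simpa only [Equiv.apply_symm_apply] using this
      · exact Finset.le_inf' _ _ fun i hi => Finset.inf'_le u ((hmem i).1 hi)
    rw [Fop, Fop, dif_pos h, dif_pos h']
    have hs : ((resid Finset.univ (u ∘ e)).sup' h' fun i => |(u ∘ e) i|)
        = (resid Finset.univ u).sup' h fun i => |u i| := key fun j => |u j|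
    rw [hs, hxi]
    split_ifs <;> first | rfl | exact key u | exact keyinf
  · have h' : ¬ (resid Finset.univ (u ∘ e)).Nonempty := by
      intro hne
      obtain ⟨i, hi⟩ := hne
      exact h ⟨e i, (hmem i).1 hi⟩
    rw [Fop, Fop, dif_neg h, dif_neg h']

def eswap : Fin 4 ≃ Fin 4 := ⟨![2,3,0,1], ![2,3,0,1], by decide, by decide⟩

lemma fLine_symm {n : ℕ} (x y : Fin n → ℝ) : fLine y x ⊆ fLine x y := by
  rintro z ⟨a, b, c, d, hp, hz⟩
  refine ⟨c, d, a, b, ?_, ?_⟩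
  · rw [show (![c,d,a,b] : Fin 4 → ℝ) = ![a,b,c,d] ∘ eswap from by funext j; fin_cases j <;> rfl]
    rw [Fop_comp]; exact hp
  · rw [hz]; funext i
    rw [show (![c * x i, d * x i, a * y i, b * y i] : Fin 4 → ℝ)
        = ![a * y i, b * y i, c * x i, d * x i] ∘ eswap from by funext j; fin_cases j <;> rfl]
    rw [Fop_comp]

lemma ne_of_abs_lt_abs {a b : ℝ} (h : |a| < |b|) : a ≠ b := fun e => by
  rw [e] at h; exact lt_irrefl _ h

lemma ne_neg_of_abs_lt_abs {a b : ℝ} (h : |a| < |b|) : a ≠ -b := fun e => by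
  rw [e, abs_neg] at h; exact lt_irrefl _ h

lemma ne_neg_self' {a : ℝ} (h : a ≠ 0) : a ≠ -a := fun e => h (by linarith)

lemma eqzero_of_factor {c Y : ℝ} (hc : 0 < c) (h0 : c * Y = 0) : Y = 0 := by
  rcases mul_eq_zero.mp h0 with h | h
  exacts [absurd h hc.ne', h]

lemma abs_mul_pos' {t X : ℝ} (ht : 0 < t) : |t * X| = t * |X| := by
  rw [abs_mul, abs_of_pos ht]

lemma abs_neg_mul' {t X : ℝ} (ht : 0 < t) : |(-t * X)| = t * |X| := by
  rw [neg_mul, abs_neg, abs_mul, abs_of_pos ht]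

lemma abs_half' (X : ℝ) : |(1/2 * X)| = |X| / 2 := by
  rw [abs_mul, abs_of_pos (show (0:ℝ) < 1/2 by norm_num)]; ring

lemma halfline {n : ℕ} (x y : Fin n → ℝ) (t : ℝ) (ht : 1 ≤ t) :
    (fun i => (if x i = y i then x i else 0) + t * bop (y i) (-(x i))) ∈ fLine x y := by
  have ht0 : (0:ℝ) < t := lt_of_lt_of_le one_pos ht
  refine ⟨-t, 1/2, t, 1, ?_, ?_⟩
  · -- parameter identity
    rcases ht.lt_or_eq with h1t | h1t
    · -- 1 < t
      have hxi0 : xiMap Finset.univ ![-t, 1/2, t, 1] (-t) = 0 := by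
        rw [xi4,
            if_pos rfl,
            if_neg (show ¬((1:ℝ)/2 = -t) from fun e => by linarith),
            if_neg (show ¬(t = -t) from fun e => by linarith),
            if_neg (show ¬((1:ℝ) = -t) from fun e => by linarith),
            if_neg (show ¬(-t = -(-t)) from fun e => by rw [neg_neg] at e; linarith),
            if_neg (show ¬((1:ℝ)/2 = -(-t)) from fun e => by rw [neg_neg] at e; linarith),
            if_pos (show t = -(-t) from (neg_neg t).symm),
            if_neg (show ¬((1:ℝ) = -(-t)) from fun e => by rw [neg_neg] at e; linarith)]
        norm_num
      apply main2 _ 1 one_ne_zero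
      · apply xiMap_pos' _ _ _ 3 (Finset.mem_univ _) rfl
        intro j _; fin_cases j
        · show -t ≠ -(1:ℝ); intro e; linarith
        · show (1:ℝ)/2 ≠ -(1:ℝ); norm_num
        · show t ≠ -(1:ℝ); intro e; linarith
        · show (1:ℝ) ≠ -(1:ℝ); norm_num
      · intro j; fin_cases j
        · right; right; right; exact hxi0
        · right; right; left
          show |(1:ℝ)/2| < |(1:ℝ)|
          rw [show |(1:ℝ)/2| = 1/2 from by rw [abs_of_pos (by norm_num : (0:ℝ) < 1/2)]]
          norm_num
        · right; right; right
          have h2 := xiMap_neg' Finset.univ ![-t, 1/2, t, 1] (-t)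
          rw [neg_neg, hxi0, neg_zero] at h2
          exact h2
        · left; rfl
    · -- 1 = t
      rw [← h1t]
      apply main2 _ 1 one_ne_zero
      · rw [xi4]; norm_num
      · have h12 : |(1:ℝ)/2| = 1/2 := by rw [abs_of_pos (by norm_num : (0:ℝ) < 1/2)]
        intro j; fin_cases j <;> norm_num [h12]
  · -- coordinates
    funext i
    show (if x i = y i then x i else 0) + t * bop (y i) (-(x i))
        = Fop Finset.univ ![-t * x i, 1/2 * x i, t * y i, 1 * y i]
    rcases lt_trichotomy (|x i|) (|y i|) with hlt | heq | hgt
    · -- |x| < |y| : value t * y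
      have hY : y i ≠ 0 := by
        intro h0; rw [h0, abs_zero] at hlt; have := abs_nonneg (x i); linarith
      have hXY : x i ≠ y i := ne_of_abs_lt_abs hlt
      have htm : t * y i ≠ 0 := mul_ne_zero ht0.ne' hY
      have hfac : (0:ℝ) ≤ (t - 1) * |y i| :=
        mul_nonneg (by linarith) (abs_nonneg _)
      have key : Fop Finset.univ ![-t * x i, 1/2 * x i, t * y i, 1 * y i] = t * y i := by
        apply main2 _ _ htm
        · apply xiMap_pos' _ _ _ 2 (Finset.mem_univ _) rfl
          intro j _; fin_cases j
          · show -t * x i ≠ -(t * y i)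
            exact ne_neg_of_abs_lt_abs
              (by rw [abs_neg_mul' ht0, abs_mul_pos' ht0]; exact (mul_lt_mul_iff_right₀ ht0).mpr hlt)
          · show 1/2 * x i ≠ -(t * y i)
            apply ne_neg_of_abs_lt_abs
            rw [abs_half', abs_mul_pos' ht0]
            nlinarith [abs_nonneg (x i)]
          · show t * y i ≠ -(t * y i)
            exact ne_neg_self' htm
          · show 1 * y i ≠ -(t * y i)
            exact fun e => hY (eqzero_of_factor (show (0:ℝ) < 1 + t by linarith)
              (by linear_combination e))
        · intro j; fin_cases j
          · right; right; left
            show |(-t * x i)| < |(t * y i)|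
            rw [abs_neg_mul' ht0, abs_mul_pos' ht0]
            exact (mul_lt_mul_iff_right₀ ht0).mpr hlt
          · right; right; left
            show |(1/2 * x i)| < |(t * y i)|
            rw [abs_half', abs_mul_pos' ht0]
            nlinarith [abs_nonneg (x i)]
          · left; rfl
          · rcases ht.lt_or_eq with h2t | h2t
            · right; right; left
              show |(1 * y i)| < |(t * y i)|
              rw [one_mul, abs_mul_pos' ht0]
              nlinarith [abs_pos.mpr hY]
            · left; show (1:ℝ) * y i = t * y i; rw [← h2t]
      rw [key, if_neg hXY]
      simp only [bop, abs_neg]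
      rw [if_pos hlt]
      ring
    · -- |x| = |y|
      rcases eq_or_ne (x i) (y i) with hxy' | hxy'
      · -- x = y : value x
        rw [if_pos hxy', ← hxy']
        have hbop : bop (x i) (-(x i)) = (x i + -(x i))/2 := by
          simp only [bop, abs_neg]
          rw [if_neg (lt_irrefl _), if_neg (lt_irrefl _)]
        rw [hbop]
        rcases eq_or_ne (x i) 0 with hx0 | hX
        · rw [hx0, Fop_of_eq_zero _ _ (by intro j _; fin_cases j <;> norm_num)]
          norm_num
        · rcases ht.lt_or_eq with h1t | h1t
          · -- 1 < t
            have hxi0 : xiMap Finset.univ ![-t * x i, 1/2 * x i, t * x i, 1 * x i] (-t * x i)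
                = 0 := by
              rw [xi4,
                  if_pos rfl,
                  if_neg (show ¬(1/2 * x i = -t * x i) from fun e => hX (eqzero_of_factor
                    (show (0:ℝ) < t + 1/2 by linarith) (by linear_combination e))),
                  if_neg (show ¬(t * x i = -t * x i) from fun e => hX (eqzero_of_factor
                    (show (0:ℝ) < 2*t by linarith) (by linear_combination e))),
                  if_neg (show ¬(1 * x i = -t * x i) from fun e => hX (eqzero_of_factor
                    (show (0:ℝ) < 1 + t by linarith) (by linear_combination e))),
                  if_neg (show ¬(-t * x i = -(-t * x i)) from fun e => hX (eqzero_of_factor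
                    (show (0:ℝ) < 2*t by linarith) (by linear_combination -e))),
                  if_neg (show ¬(1/2 * x i = -(-t * x i)) from fun e => hX (eqzero_of_factor
                    (show (0:ℝ) < t - 1/2 by linarith) (by linear_combination -e))),
                  if_pos (show t * x i = -(-t * x i) by ring),
                  if_neg (show ¬(1 * x i = -(-t * x i)) from fun e => hX (eqzero_of_factor
                    (show (0:ℝ) < t - 1 by linarith) (by linear_combination -e)))]
              norm_num
            have key : Fop Finset.univ ![-t * x i, 1/2 * x i, t * x i, 1 * x i] = 1 * x i := by
              apply main2 _ _ (show (1:ℝ) * x i ≠ 0 by rw [one_mul]; exact hX)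
              · apply xiMap_pos' _ _ _ 3 (Finset.mem_univ _) rfl
                intro j _; fin_cases j
                · show -t * x i ≠ -(1 * x i)
                  exact fun e => hX (eqzero_of_factor (show (0:ℝ) < t - 1 by linarith)
                    (by linear_combination -e))
                · show 1/2 * x i ≠ -(1 * x i)
                  exact fun e => hX (eqzero_of_factor (show (0:ℝ) < 3/2 by norm_num)
                    (by linear_combination e))
                · show t * x i ≠ -(1 * x i)
                  exact fun e => hX (eqzero_of_factor (show (0:ℝ) < t + 1 by linarith)
                    (by linear_combination e))
                · show 1 * x i ≠ -(1 * x i)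
                  exact ne_neg_self' (show (1:ℝ) * x i ≠ 0 by rw [one_mul]; exact hX)
              · intro j; fin_cases j
                · right; right; right; exact hxi0
                · right; right; left
                  show |(1/2 * x i)| < |(1 * x i)|
                  rw [abs_half', one_mul]
                  have := abs_pos.mpr hX; linarith
                · right; right; right
                  have h2 := xiMap_neg' Finset.univ ![-t * x i, 1/2 * x i, t * x i, 1 * x i]
                    (-t * x i)
                  rw [hxi0, neg_zero] at h2
                  rw [show -(-t * x i) = t * x i by ring] at h2
                  exact h2
                · left; rfl
            rw [key]; ring
          · -- 1 = t
            rw [← h1t]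
            have key : Fop Finset.univ ![-1 * x i, 1/2 * x i, 1 * x i, 1 * x i] = 1 * x i := by
              apply main2 _ _ (show (1:ℝ) * x i ≠ 0 by rw [one_mul]; exact hX)
              · rw [xi4,
                    if_neg (show ¬(-1 * x i = 1 * x i) from fun e => hX (eqzero_of_factor
                      (show (0:ℝ) < 2 by norm_num) (by linear_combination -e))),
                    if_neg (show ¬(1/2 * x i = 1 * x i) from fun e => hX (eqzero_of_factor
                      (show (0:ℝ) < 1/2 by norm_num) (by linear_combination -e))),
                    if_pos (show (1:ℝ) * x i = 1 * x i from rfl),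
                    if_pos (show (-1:ℝ) * x i = -(1 * x i) by ring),
                    if_neg (show ¬(1/2 * x i = -(1 * x i)) from fun e => hX (eqzero_of_factor
                      (show (0:ℝ) < 3/2 by norm_num) (by linear_combination e))),
                    if_neg (show ¬((1:ℝ) * x i = -(1 * x i)) from fun e => hX (eqzero_of_factor
                      (show (0:ℝ) < 2 by norm_num) (by linear_combination e)))]
                norm_num
              · intro j; fin_cases j
                · right; left; show -1 * x i = -(1 * x i); ring
                · right; right; left
                  show |(1/2 * x i)| < |(1 * x i)|
                  rw [abs_half', one_mul]
                  have := abs_pos.mpr hX; linarith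
                · left; rfl
                · left; rfl
            rw [key]; ring
      · -- x = -y : value -t * x
        have hyx : x i = -(y i) := by
          rcases abs_eq_abs.mp heq with h | h
          · exact absurd h hxy'
          · exact h
        have hy : y i = -(x i) := by linarith
        have hX : x i ≠ 0 := by
          intro h0
          apply hxy'
          rw [h0, hy, h0, neg_zero]
        have hm : -t * x i ≠ 0 := mul_ne_zero (neg_ne_zero.mpr ht0.ne') hX
        rw [if_neg hxy', hy]
        have hbop : bop (-(x i)) (-(x i)) = (-(x i) + -(x i))/2 := by
          simp only [bop]
          rw [if_neg (lt_irrefl _), if_neg (lt_irrefl _)]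
        rw [hbop]
        have key : Fop Finset.univ ![-t * x i, 1/2 * x i, t * -(x i), 1 * -(x i)] = -t * x i := by
          apply main2 _ _ hm
          · apply xiMap_pos' _ _ _ 0 (Finset.mem_univ _) rfl
            intro j _; fin_cases j
            · show -t * x i ≠ -(-t * x i); exact ne_neg_self' hm
            · show 1/2 * x i ≠ -(-t * x i)
              apply ne_neg_of_abs_lt_abs
              rw [abs_half', abs_neg_mul' ht0]
              nlinarith [abs_pos.mpr hX, mul_nonneg (show (0:ℝ) ≤ t - 1 by linarith) (abs_nonneg (x i))]
            · show t * -(x i) ≠ -(-t * x i)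
              exact fun e => hX (eqzero_of_factor (show (0:ℝ) < 2*t by linarith)
                (by linear_combination -e))
            · show 1 * -(x i) ≠ -(-t * x i)
              exact fun e => hX (eqzero_of_factor (show (0:ℝ) < 1 + t by linarith)
                (by linear_combination -e))
          · intro j; fin_cases j
            · left; rfl
            · right; right; left
              show |(1/2 * x i)| < |(-t * x i)|
              rw [abs_half', abs_neg_mul' ht0]
              nlinarith [abs_pos.mpr hX, mul_nonneg (show (0:ℝ) ≤ t - 1 by linarith) (abs_nonneg (x i))]
            · left; show t * -(x i) = -t * x i; ring
            · rcases ht.lt_or_eq with h2t | h2t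
              · right; right; left
                show |(1 * -(x i))| < |(-t * x i)|
                rw [one_mul, abs_neg, abs_neg_mul' ht0]
                nlinarith [abs_pos.mpr hX]
              · left; show 1 * -(x i) = -t * x i; rw [← h2t]; ring
        rw [key]; ring
    · -- |y| < |x| : value -t * x
      have hX : x i ≠ 0 := by
        intro h0; rw [h0, abs_zero] at hgt; have := abs_nonneg (y i); linarith
      have hXY : x i ≠ y i := (ne_of_abs_lt_abs hgt).symm
      have hm : -t * x i ≠ 0 := mul_ne_zero (neg_ne_zero.mpr ht0.ne') hX
      have key : Fop Finset.univ ![-t * x i, 1/2 * x i, t * y i, 1 * y i] = -t * x i := by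
        apply main2 _ _ hm
        · apply xiMap_pos' _ _ _ 0 (Finset.mem_univ _) rfl
          intro j _; fin_cases j
          · show -t * x i ≠ -(-t * x i); exact ne_neg_self' hm
          · show 1/2 * x i ≠ -(-t * x i)
            apply ne_neg_of_abs_lt_abs
            rw [abs_half', abs_neg_mul' ht0]
            nlinarith [abs_pos.mpr hX, mul_nonneg (show (0:ℝ) ≤ t - 1 by linarith) (abs_nonneg (x i))]
          · show t * y i ≠ -(-t * x i)
            apply ne_neg_of_abs_lt_abs
            rw [abs_mul_pos' ht0, abs_neg_mul' ht0]
            exact (mul_lt_mul_iff_right₀ ht0).mpr hgt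
          · show 1 * y i ≠ -(-t * x i)
            apply ne_neg_of_abs_lt_abs
            rw [one_mul, abs_neg_mul' ht0]
            nlinarith [mul_nonneg (show (0:ℝ) ≤ t - 1 by linarith) (abs_nonneg (x i))]
        · intro j; fin_cases j
          · left; rfl
          · right; right; left
            show |(1/2 * x i)| < |(-t * x i)|
            rw [abs_half', abs_neg_mul' ht0]
            nlinarith [abs_pos.mpr hX, mul_nonneg (show (0:ℝ) ≤ t - 1 by linarith) (abs_nonneg (x i))]
          · right; right; left
            show |(t * y i)| < |(-t * x i)|
            rw [abs_mul_pos' ht0, abs_neg_mul' ht0]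
            exact (mul_lt_mul_iff_right₀ ht0).mpr hgt
          · right; right; left
            show |(1 * y i)| < |(-t * x i)|
            rw [one_mul, abs_neg_mul' ht0]
            nlinarith [mul_nonneg (show (0:ℝ) ≤ t - 1 by linarith) (abs_nonneg (x i))]
      rw [key, if_neg hXY]
      simp only [bop, abs_neg]
      rw [if_neg (not_lt.mpr hgt.le), if_pos hgt]
      ring

/-- the F-line `D^∞(x,y)` contains the two half-lines
`x_{[J]} + t·(y ⊟ x)` and `x_{[J]} + t·(x ⊟ y)`, `t ≥ 1`,
where `J = {i : x i = y i}`. -/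
theorem stmt18 (n : ℕ) (x y : Fin n → ℝ) (hxy : x ≠ y) :
    (∀ t : ℝ, 1 ≤ t →
      (fun i => (if x i = y i then x i else 0) + t * bop (y i) (-(x i))) ∈ fLine x y) ∧
    (∀ t : ℝ, 1 ≤ t →
      (fun i => (if x i = y i then x i else 0) + t * bop (x i) (-(y i))) ∈ fLine x y) := by
  constructor
  · intro t ht
    exact halfline x y t ht
  · intro t ht
    have h := halfline y x t ht
    have hfun : (fun i => (if y i = x i then y i else 0) + t * bop (x i) (-(y i)))
        = (fun i => (if x i = y i then x i else 0) + t * bop (x i) (-(y i))) := by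
      funext i
      rcases eq_or_ne (x i) (y i) with hh | hh
      · rw [if_pos hh.symm, if_pos hh, hh]
      · rw [if_neg (Ne.symm hh), if_neg hh]
    rw [hfun] at h
    exact fLine_symm x y h
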